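/- Let A_S be the automaton over Σ_k^2 with states {q₀, q₁, s}, initial state q₀, and transitions: (q₀, (k−1, 0), q₀); (q₀, (a, a+1), q₁) for every a ∈ {0,…,k−2}; (q₁, (a, a), q₁) for every a ∈ {0,…,k−1}; and all remaining letter–state pairs lead to the sink s (including (s, ·, s)). Then for all x, y, n ∈ ℕ: (x mod k^n = k^n − 1 and y mod k^n = 0) if and only if W_{A_S,q₀}(x, y, n); and (x mod k^n) + 1 = y mod k^n if and only if W_{A_S,q₁}(x, y, n). -/

import Mathlib

/-- The `i`-th base-`k` digit of `x`. -/
def digit (k x i : ℕ) : ℕ := x / k ^ i % k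

/-- A finite automaton over the alphabet `Σ_k^m = (Fin k)^m`. -/
structure FA (k m : ℕ) where
  Q : Type
  fin : Finite Q
  q0 : Q
  acc : Set Q
  δ : Set (Q × (Fin m → Fin k) × Q)

/-- The run predicate `W_{A,q₁}(x⃗, n)`: the automaton `A` can reach state `q₁`
after reading the first `n` base-`k` digits of `x⃗`, the run being encoded by a
family `(w_q)` of natural numbers. -/
def FA.W {k m : ℕ} (A : FA k m) (q1 : A.Q) (x : Fin m → ℕ) (n : ℕ) : Prop :=
  ∃ w : A.Q → ℕ,
    (∀ q, w q < k ^ (n + 1)) ∧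
    (∀ i ≤ n, ∃ q, digit k (w q) i = 1 ∧ ∀ q' ≠ q, digit k (w q') i = 0) ∧
    digit k (w A.q0) 0 = 1 ∧ digit k (w q1) n = 1 ∧
    ∀ i < n, ∀ q, digit k (w q) i = 1 →
      ∃ a : Fin m → Fin k, ∃ q', (q, a, q') ∈ A.δ ∧ digit k (w q') (i + 1) = 1 ∧
        ∀ j, digit k (x j) i = (a j : ℕ)

/-- The automaton `A_S` recognizing `S(x) = y`: states `q₀ = 0`, `q₁ = 1` and a
sink `s = 2`; transitions `(q₀,(k-1,0),q₀)`, `(q₀,(a,a+1),q₁)` for `a ≤ k-2`,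
`(q₁,(a,a),q₁)`, and all remaining letter–state pairs go to the sink. -/
def AS (k : ℕ) : FA k 2 where
  Q := Fin 3
  fin := inferInstance
  q0 := 0
  acc := {1}
  δ := {t | (t.1 = 0 ∧ ((t.2.1 0 : ℕ) = k - 1 ∧ (t.2.1 1 : ℕ) = 0) ∧ t.2.2 = 0) ∨
            (t.1 = 0 ∧ ((t.2.1 0 : ℕ) + 1 = (t.2.1 1 : ℕ)) ∧ t.2.2 = 1) ∨
            (t.1 = 1 ∧ (t.2.1 0 = t.2.1 1) ∧ t.2.2 = 1) ∨
            (t.1 = 0 ∧ ¬((t.2.1 0 : ℕ) = k - 1 ∧ (t.2.1 1 : ℕ) = 0) ∧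
              ¬((t.2.1 0 : ℕ) + 1 = (t.2.1 1 : ℕ)) ∧ t.2.2 = 2) ∨
            (t.1 = 1 ∧ t.2.1 0 ≠ t.2.1 1 ∧ t.2.2 = 2) ∨
            (t.1 = 2 ∧ t.2.2 = 2)}


namespace S16


lemma mod_pow_succ' (k x n : ℕ) : x % k^(n+1) = x % k^n + k^n * digit k x n := by
  rw [pow_succ, Nat.mod_mul]; rfl

lemma digit_lt {k : ℕ} (hk : 2 ≤ k) (x i : ℕ) : digit k x i < k :=
  Nat.mod_lt _ (by omega)

lemma digit_mod {k : ℕ} (x i n : ℕ) (h : i ≤ n) :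
    digit k (x % k^(n+1)) i = digit k x i := by
  unfold digit
  have h1 : k^(n+1) = k^i * (k * k^(n-i)) := by
    rw [← pow_succ', ← pow_add]; congr 1; omega
  rw [h1, Nat.mod_mul_right_div_self, Nat.mod_mod_of_dvd _ (dvd_mul_right k _)]

lemma digit_add_pow_lt {k : ℕ} (hk : 2 ≤ k) (w n i : ℕ) (hi : i ≤ n) :
    digit k (w + k^(n+1)) i = digit k w i := by
  unfold digit
  have h1 : k^(n+1) = k^i * (k * k^(n-i)) := by
    rw [← pow_succ', ← pow_add]; congr 1; omega
  rw [h1, Nat.add_mul_div_left _ _ (pow_pos (by omega) i),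
    Nat.add_mul_mod_self_left]

lemma digit_add_pow_top {k : ℕ} (hk : 2 ≤ k) (w n : ℕ) (hw : w < k^(n+1)) :
    digit k (w + k^(n+1)) (n+1) = 1 := by
  unfold digit
  rw [Nat.add_div_right _ (pow_pos (by omega) _), Nat.div_eq_of_lt hw]
  exact Nat.mod_eq_of_lt (by omega)

lemma digit_eq_zero_of_lt {k w i : ℕ} (hw : w < k^i) : digit k w i = 0 := by
  unfold digit; rw [Nat.div_eq_of_lt hw, Nat.zero_mod]

lemma W_zero {k m : ℕ} (hk : 2 ≤ k) (A : FA k m) (q1 : A.Q) (x : Fin m → ℕ) :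
    A.W q1 x 0 ↔ q1 = A.q0 := by
  classical
  constructor
  · rintro ⟨w, _, hu, h0, h1, _⟩
    obtain ⟨q, hq, hq'⟩ := hu 0 le_rfl
    have key : ∀ q', digit k (w q') 0 = 1 → q' = q := by
      intro q' h
      by_contra hne
      rw [hq' q' hne] at h; omega
    rw [key q1 h1, key A.q0 h0]
  · rintro rfl
    have h1k : (1:ℕ) % k = 1 := Nat.mod_eq_of_lt (by omega)
    refine ⟨fun q => if q = A.q0 then 1 else 0, ?_, ?_, ?_, ?_, ?_⟩
    · intro q
      have h2 : 2 ≤ k^(0+1) := by simpa using hk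
      dsimp only; split <;> omega
    · intro i hi
      interval_cases i
      refine ⟨A.q0, ?_, fun q' hne => ?_⟩
      · simp [digit, h1k]
      · simp [digit, if_neg hne]
    · simp [digit, h1k]
    · simp [digit, h1k]
    · intro i hi; omega
  
lemma W_succ {k m : ℕ} (hk : 2 ≤ k) (A : FA k m) (q1 : A.Q) (x : Fin m → ℕ) (n : ℕ) :
    A.W q1 x (n+1) ↔ ∃ q, A.W q x n ∧ ∃ a : Fin m → Fin k, (q, a, q1) ∈ A.δ ∧
      ∀ j, digit k (x j) n = (a j : ℕ) := by
  classical
  constructor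
  · rintro ⟨w, hb, hu, h0, h1, hstep⟩
    obtain ⟨q, hq, hq'⟩ := hu n (by omega)
    obtain ⟨a, q', hδ, hd, hx⟩ := hstep n (by omega) q hq
    obtain ⟨r, hr, hr'⟩ := hu (n+1) le_rfl
    have hq'1 : q' = r := by by_contra h; rw [hr' q' h] at hd; omega
    have hq1r : q1 = r := by by_contra h; rw [hr' q1 h] at h1; omega
    refine ⟨q, ⟨fun s => w s % k^(n+1), ?_, ?_, ?_, ?_, ?_⟩, a, ?_, hx⟩
    · intro s; exact Nat.mod_lt _ (pow_pos (by omega) _)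
    · intro i hi
      obtain ⟨s, hs, hs'⟩ := hu i (by omega)
      exact ⟨s, by rw [digit_mod _ i n hi]; exact hs,
        fun t ht => by rw [digit_mod _ i n hi]; exact hs' t ht⟩
    · rw [digit_mod _ 0 n (by omega)]; exact h0
    · rw [digit_mod _ n n le_rfl]; exact hq
    · intro i hi s hsd
      rw [digit_mod _ i n (by omega)] at hsd
      obtain ⟨a', s', hδ', hd', hx'⟩ := hstep i (by omega) s hsd
      exact ⟨a', s', hδ', by rw [digit_mod _ (i+1) n (by omega)]; exact hd', hx'⟩
    · rwa [hq'1, ← hq1r] at hδ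
  · rintro ⟨q, ⟨w, hb, hu, h0, hqn, hstep⟩, a, hδ, hx⟩
    obtain ⟨r, hr, hr'⟩ := hu n le_rfl
    have hqr : q = r := by by_contra h; rw [hr' q h] at hqn; omega
    subst hqr
    set w' : A.Q → ℕ := fun s => w s + if s = q1 then k^(n+1) else 0 with hw'
    have hdl : ∀ s, ∀ i ≤ n, digit k (w' s) i = digit k (w s) i := by
      intro s i hi
      rw [hw']
      dsimp only
      split
      · exact digit_add_pow_lt hk _ n i hi
      · rw [Nat.add_zero]
    have hdt : ∀ s, digit k (w' s) (n+1) = if s = q1 then 1 else 0 := by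
      intro s
      rw [hw']
      dsimp only
      split
      · exact digit_add_pow_top hk _ n (hb s)
      · rw [Nat.add_zero]; exact digit_eq_zero_of_lt (hb s)
    refine ⟨w', ?_, ?_, ?_, ?_, ?_⟩
    · intro s
      have h2 : k^(n+1) * 2 ≤ k^(n+1+1) := by
        rw [pow_succ]; exact Nat.mul_le_mul_left _ hk
      have := hb s
      rw [hw']; dsimp only; split <;> omega
    · intro i hi
      by_cases hi' : i ≤ n
      · obtain ⟨s, hs, hs'⟩ := hu i hi'
        exact ⟨s, by rw [hdl s i hi']; exact hs,
          fun t ht => by rw [hdl t i hi']; exact hs' t ht⟩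
      · have : i = n + 1 := by omega
        subst this
        exact ⟨q1, by rw [hdt]; simp, fun t ht => by rw [hdt]; simp [ht]⟩
    · rw [hdl _ 0 (by omega)]; exact h0
    · rw [hdt]; simp
    · intro i hi s hs
      by_cases hi' : i < n
      · rw [hdl s i (by omega)] at hs
        obtain ⟨a', s', hδ', hd', hx'⟩ := hstep i hi' s hs
        exact ⟨a', s', hδ', by rw [hdl s' (i+1) (by omega)]; exact hd', hx'⟩
      · have hie : i = n := by omega
        rw [hie] at hs ⊢
        rw [hdl s n le_rfl] at hs
        have hsq : s = q := by by_contra h; rw [hr' s h] at hs; omega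
        subst hsq
        exact ⟨a, q1, hδ, by rw [hdt]; simp, hx⟩


lemma decomp_unique {P a b d e : ℕ} (hP : 0 < P) (ha : a < P) (hb : b < P)
    (h : a + P * d = b + P * e) : a = b ∧ d = e := by
  have h1 := congrArg (· / P) h
  have h2 := congrArg (· % P) h
  simp only [Nat.add_mul_div_left _ _ hP, Nat.div_eq_of_lt ha, Nat.div_eq_of_lt hb,
    Nat.add_mul_mod_self_left, Nat.mod_eq_of_lt ha, Nat.mod_eq_of_lt hb] at h1 h2
  omega

lemma AS_step0 {k : ℕ} (hk : 2 ≤ k) (x : Fin 2 → ℕ) (n : ℕ) :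
    (AS k).W (0 : Fin 3) x (n+1) ↔
      ((AS k).W (0 : Fin 3) x n ∧ digit k (x 0) n = k - 1 ∧ digit k (x 1) n = 0) := by
  refine (W_succ hk (AS k) (0 : Fin 3) x n).trans ?_
  constructor
  · rintro ⟨q, hW, a, hδ, hx⟩
    simp only [AS, Set.mem_setOf_eq] at hδ
    rcases hδ with ⟨hq, ⟨ha0, ha1⟩, _⟩ | ⟨_, _, h⟩ | ⟨_, _, h⟩ | ⟨_, _, _, h⟩ | ⟨_, _, h⟩ | ⟨_, h⟩
    · subst hq
      exact ⟨hW, by rw [hx 0, ha0], by rw [hx 1, ha1]⟩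
    all_goals exact absurd h (by simp)
  · rintro ⟨hW, h0, h1⟩
    refine ⟨(0 : Fin 3), hW, ![⟨k-1, by omega⟩, ⟨0, by omega⟩], ?_, ?_⟩
    · exact Or.inl ⟨rfl, ⟨rfl, rfl⟩, rfl⟩
    · intro j
      fin_cases j <;> simp [h0, h1]

lemma AS_step1 {k : ℕ} (hk : 2 ≤ k) (x : Fin 2 → ℕ) (n : ℕ) :
    (AS k).W (1 : Fin 3) x (n+1) ↔
      (((AS k).W (0 : Fin 3) x n ∧ digit k (x 0) n + 1 = digit k (x 1) n) ∨
       ((AS k).W (1 : Fin 3) x n ∧ digit k (x 0) n = digit k (x 1) n)) := by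
  refine (W_succ hk (AS k) (1 : Fin 3) x n).trans ?_
  constructor
  · rintro ⟨q, hW, a, hδ, hx⟩
    simp only [AS, Set.mem_setOf_eq] at hδ
    rcases hδ with ⟨_, _, h⟩ | ⟨hq, ha, _⟩ | ⟨hq, ha, _⟩ | ⟨_, _, _, h⟩ | ⟨_, _, h⟩ | ⟨_, h⟩
    · exact absurd h (by simp)
    · subst hq
      exact Or.inl ⟨hW, by rw [hx 0, hx 1]; exact ha⟩
    · subst hq
      exact Or.inr ⟨hW, by rw [hx 0, hx 1]; exact congrArg Fin.val ha⟩
    all_goals exact absurd h (by simp)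
  · rintro (⟨hW, h01⟩ | ⟨hW, h01⟩)
    · have hd1 : digit k (x 1) n < k := digit_lt hk _ _
      refine ⟨(0 : Fin 3), hW, ![⟨digit k (x 0) n, digit_lt hk _ _⟩, ⟨digit k (x 1) n, hd1⟩], ?_, ?_⟩
      · exact Or.inr (Or.inl ⟨rfl, h01, rfl⟩)
      · intro j; fin_cases j <;> simp
    · refine ⟨(1 : Fin 3), hW, ![⟨digit k (x 0) n, digit_lt hk _ _⟩, ⟨digit k (x 1) n, digit_lt hk _ _⟩], ?_, ?_⟩
      · exact Or.inr (Or.inr (Or.inl ⟨rfl, Fin.ext h01, rfl⟩))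
      · intro j; fin_cases j <;> simp

lemma P0_succ {k : ℕ} (hk : 2 ≤ k) (x y n : ℕ) :
    (x % k^(n+1) = k^(n+1) - 1 ∧ y % k^(n+1) = 0) ↔
    ((x % k^n = k^n - 1 ∧ y % k^n = 0) ∧ digit k x n = k - 1 ∧ digit k y n = 0) := by
  have hP : 0 < k^n := pow_pos (by omega) _
  have hxm : x % k^n < k^n := Nat.mod_lt _ hP
  have hym : y % k^n < k^n := Nat.mod_lt _ hP
  have hdx : digit k x n < k := digit_lt hk x n
  have hdy : digit k y n < k := digit_lt hk y n
  have hdec : k^(n+1) - 1 = (k^n - 1) + k^n * (k-1) := by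
    have h1 : k^(n+1) = k^n * k := pow_succ k n
    have h2 : k^n * k = k^n * (k-1) + k^n := by
      rw [← Nat.mul_succ]; congr 1; omega
    omega
  rw [mod_pow_succ' k x n, mod_pow_succ' k y n, hdec]
  constructor
  · rintro ⟨h1, h2⟩
    obtain ⟨e2, e3⟩ := decomp_unique hP hxm (by omega) h1
    have e5 : y % k^n = 0 := Nat.eq_zero_of_add_eq_zero_right h2
    have e5' : k^n * digit k y n = 0 := Nat.eq_zero_of_add_eq_zero_left h2
    have e6 : digit k y n = 0 := by
      rcases Nat.mul_eq_zero.mp e5' with h | h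
      · omega
      · exact h
    exact ⟨⟨e2, e5⟩, e3, e6⟩
  · rintro ⟨⟨h1, h2⟩, h3, h4⟩
    rw [h1, h2, h3, h4, Nat.mul_zero]
    exact ⟨rfl, rfl⟩

lemma P1_succ {k : ℕ} (hk : 2 ≤ k) (x y n : ℕ) :
    (x % k^(n+1) + 1 = y % k^(n+1)) ↔
    (((x % k^n = k^n - 1 ∧ y % k^n = 0) ∧ digit k x n + 1 = digit k y n) ∨
     ((x % k^n + 1 = y % k^n) ∧ digit k x n = digit k y n)) := by
  have hP : 0 < k^n := pow_pos (by omega) _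
  have hxm : x % k^n < k^n := Nat.mod_lt _ hP
  have hym : y % k^n < k^n := Nat.mod_lt _ hP
  have hmul : k^n * (digit k x n + 1) = k^n * digit k x n + k^n := Nat.mul_succ _ _
  rw [mod_pow_succ' k x n, mod_pow_succ' k y n]
  constructor
  · intro h
    by_cases hc : x % k^n + 1 = k^n
    · left
      have e1 : 0 + k^n * (digit k x n + 1) = y % k^n + k^n * digit k y n := by
        rw [hmul]
        generalize k ^ n * digit k x n = A at h ⊢
        generalize k ^ n * digit k y n = B at h ⊢
        omega
      obtain ⟨e2, e3⟩ := decomp_unique hP hP hym e1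
      exact ⟨⟨by omega, e2.symm⟩, e3⟩
    · right
      have e1 : (x % k^n + 1) + k^n * digit k x n = y % k^n + k^n * digit k y n := by
        generalize k ^ n * digit k x n = A at h ⊢
        generalize k ^ n * digit k y n = B at h ⊢
        omega
      obtain ⟨e2, e3⟩ := decomp_unique hP (by omega) hym e1
      exact ⟨e2, e3⟩
  · rintro (⟨⟨h1, h2⟩, h3⟩ | ⟨h1, h2⟩)
    · have e : k^n * digit k y n = k^n * digit k x n + k^n := by
        rw [← h3]; exact hmul
      rw [h1, h2, e]
      generalize k ^ n * digit k x n = A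
      omega
    · rw [h2]
      generalize k ^ n * digit k y n = B
      omega

end S16

/-- `A_S` computes the successor on residues modulo `k^n`:
state `q₀` is reached iff `x ≡ k^n - 1` and `y ≡ 0`, and state `q₁` is reached
iff `(x mod k^n) + 1 = y mod k^n`. -/
theorem stmt16 (k : ℕ) (hk : 2 ≤ k) :
    ∀ x y n : ℕ,
      ((x % k ^ n = k ^ n - 1 ∧ y % k ^ n = 0) ↔ (AS k).W (0 : Fin 3) ![x, y] n) ∧
      ((x % k ^ n) + 1 = y % k ^ n ↔ (AS k).W (1 : Fin 3) ![x, y] n) := by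
  intro x y n
  induction n with
  | zero =>
    constructor
    · refine Iff.trans ?_ (S16.W_zero hk (AS k) (0 : Fin 3) ![x, y]).symm
      simp [AS, Nat.mod_one]
    · refine Iff.trans ?_ (S16.W_zero hk (AS k) (1 : Fin 3) ![x, y]).symm
      simp [AS, Nat.mod_one]
  | succ n ih =>
    obtain ⟨ih0, ih1⟩ := ih
    have hc0 : (![x, y] : Fin 2 → ℕ) 0 = x := rfl
    have hc1 : (![x, y] : Fin 2 → ℕ) 1 = y := rfl
    constructor
    · rw [S16.AS_step0 hk ![x, y] n, S16.P0_succ hk x y n, hc0, hc1, ih0]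
    · rw [S16.AS_step1 hk ![x, y] n, S16.P1_succ hk x y n, hc0, hc1, ih0, ih1]
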